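/- There exist infinitely many rational numbers c such that the map f_c(z) = z^2 + c has exactly 6 rational preperiodic points, of which exactly 2 are periodic, and both periodic points are fixed points of f_c. (This data characterizes the directed graph 6(1,1).) -/

import Mathlib

set_option maxHeartbeats 1000000

/-- The quadratic map `f_c(z) = z² + c`. -/
def fc (c : ℚ) : ℚ → ℚ := fun z => z ^ 2 + c

/-- `x` is preperiodic for `f_c`: its forward orbit is eventually periodic. -/
def IsPreper (c x : ℚ) : Prop := ∃ m n : ℕ, m < n ∧ (fc c)^[m] x = (fc c)^[n] x

/-- `x` is periodic for `f_c`. -/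
def IsPer (c x : ℚ) : Prop := ∃ n : ℕ, 1 ≤ n ∧ (fc c)^[n] x = x

def MM (k : ℤ) : ℤ := 2*(k+1)^2*(2*k^2+2*k+1)
def cc (p : ℕ) (k : ℤ) : ℚ := -(MM k : ℚ) / (p : ℚ)^2


lemma not_preper_of_lt (c x : ℚ) (φ : ℚ → ℚ)
    (h : ∀ n : ℕ, φ ((fc c)^[n] x) < φ ((fc c)^[n+1] x)) : ¬ IsPreper c x := by
  have hs : StrictMono (fun n : ℕ => φ ((fc c)^[n] x)) := strictMono_nat_of_lt_succ h
  rintro ⟨m, n, hmn, he⟩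
  exact absurd (congrArg φ he) (ne_of_lt (hs hmn))

lemma not_preper_invariant (c x : ℚ) (Q : ℚ → Prop) (φ : ℚ → ℚ) (hx : Q x)
    (hstep : ∀ y, Q y → Q (fc c y) ∧ φ y < φ (fc c y)) : ¬ IsPreper c x := by
  have key : ∀ n : ℕ, Q ((fc c)^[n] x) := by
    intro n
    induction n with
    | zero => exact hx
    | succ n ih => rw [Function.iterate_succ_apply']; exact (hstep _ ih).1
  exact not_preper_of_lt c x φ (fun n => by
    rw [Function.iterate_succ_apply']
    exact (hstep _ (key n)).2)

lemma isPreper_fc {c x : ℚ} (h : IsPreper c x) : IsPreper c (fc c x) := by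
  obtain ⟨m, n, hmn, he⟩ := h
  exact ⟨m, n, hmn, by
    rw [← Function.iterate_succ_apply, ← Function.iterate_succ_apply,
      Function.iterate_succ_apply', Function.iterate_succ_apply', he]⟩

lemma isPer_isPreper {c x : ℚ} (h : IsPer c x) : IsPreper c x := by
  obtain ⟨n, hn, he⟩ := h
  exact ⟨0, n, hn, by simpa using he.symm⟩

/-- a rational with all p-adic norms ≤ 1 is an integer -/
lemma int_of_padicNorm_le_one {y : ℚ} (h : ∀ q : ℕ, q.Prime → padicNorm q y ≤ 1) :
    ∃ z : ℤ, y = (z : ℚ) := by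
  refine ⟨y.num, ?_⟩
  have hden : y.den = 1 := by
    by_contra hd
    obtain ⟨q, hq, hqd⟩ := Nat.exists_prime_and_dvd hd
    have hy0 : y ≠ 0 := by
      intro h0; rw [h0] at hd; exact hd rfl
    have hnum : ¬ (q : ℤ) ∣ y.num := by
      intro hdvd
      have : q ∣ y.num.natAbs := Int.natCast_dvd_natCast.mp (by simpa using (Int.dvd_natAbs.mpr hdvd))
      exact (Nat.Prime.not_dvd_one hq) (y.reduced ▸ Nat.dvd_gcd this hqd)
    have hvint : padicValInt q y.num = 0 := padicValInt.eq_zero_of_not_dvd hnum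
    have hvden : 1 ≤ padicValNat q y.den := by
      haveI : Fact q.Prime := ⟨hq⟩
      exact one_le_padicValNat_of_dvd y.den_nz hqd
    have hval : padicValRat q y ≤ -1 := by
      rw [padicValRat_def, hvint]
      omega
    have hnorm : (q : ℚ) ^ (1 : ℤ) ≤ padicNorm q y := by
      rw [padicNorm.eq_zpow_of_nonzero hy0]
      exact zpow_le_zpow_right₀ (by exact_mod_cast hq.one_lt.le) (by omega)
    have : (1 : ℚ) < q := by exact_mod_cast hq.one_lt
    have := h q hq
    simp only [zpow_one] at hnorm
    linarith
  rw [← Rat.num_div_den y, hden]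
  norm_num

section
variable {p : ℕ} {k : ℤ}

lemma not_dvd_MM (hp : p.Prime) (hP : (p:ℤ) = 2*k+1) : ¬ (p:ℤ) ∣ MM k := by
  intro h
  have h4 : (p:ℤ) ∣ 4 * MM k := Dvd.dvd.mul_left h 4
  have key : 4 * MM k - 1 = (p:ℤ) * (8*k^3+20*k^2+18*k+7) := by
    rw [hP, MM]; ring
  have : (p:ℤ) ∣ 1 := (dvd_sub_right h4).mp (key ▸ Dvd.intro _ rfl)
  have := Int.le_of_dvd one_pos this
  have : (2:ℤ) ≤ (p:ℤ) := by exact_mod_cast hp.two_le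
  omega

lemma norm_cc_p (hp : p.Prime) (hP : (p:ℤ) = 2*k+1) :
    padicNorm p (cc p k) = (p : ℚ)^2 := by
  haveI : Fact p.Prime := ⟨hp⟩
  have hp1 : 1 < p := hp.one_lt
  have hp0 : (p:ℚ) ≠ 0 := by positivity
  have hM : padicNorm p ((MM k : ℚ)) = 1 := (padicNorm.int_eq_one_iff _).mpr (not_dvd_MM hp hP)
  have hpp : padicNorm p ((p:ℚ)^2) = ((p:ℚ)^2)⁻¹ := by
    rw [sq, padicNorm.mul, padicNorm.padicNorm_p hp1]
    exact (mul_inv _ _).symm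
  rw [cc, padicNorm.div, padicNorm.neg, hM, hpp]
  field_simp

lemma norm_cc_q (hq : q.Prime) (hqp : q ≠ p) (hp : p.Prime) :
    padicNorm q (cc p k) ≤ 1 := by
  haveI : Fact q.Prime := ⟨hq⟩
  have hpq : padicNorm q ((p:ℚ)^2) = 1 := by
    have : ¬ (q:ℤ) ∣ ((p:ℤ))^2 := by
      intro h
      have := hq.dvd_of_dvd_pow (n := 2) (by exact_mod_cast Int.natCast_dvd_natCast.mp (by exact_mod_cast h))
      exact hqp ((Nat.prime_dvd_prime_iff_eq hq hp).mp this)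
    have := (padicNorm.int_eq_one_iff (p := q) ((p:ℤ)^2)).mpr this
    simpa using this
  rw [cc, padicNorm.div, padicNorm.neg, hpq, div_one]
  exact padicNorm.of_int _
end

lemma norm_sq (q : ℕ) [Fact q.Prime] (y : ℚ) : padicNorm q (y^2) = (padicNorm q y)^2 := by
  rw [sq, sq, padicNorm.mul]

lemma escape_q {q : ℕ} [Fact q.Prime] {c x : ℚ} (hc : padicNorm q c ≤ 1)
    (hx : 1 < padicNorm q x) : ¬ IsPreper c x := by
  apply not_preper_invariant c x (fun y => 1 < padicNorm q y) (padicNorm q) hx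
  intro y hy
  have h2 : padicNorm q (y^2) = (padicNorm q y)^2 := norm_sq q y
  have hgt : padicNorm q c < padicNorm q (y^2) := by nlinarith
  have hmax : padicNorm q (y^2 + c) = padicNorm q (y^2) := by
    rw [padicNorm.add_eq_max_of_ne (ne_of_gt hgt)]
    exact max_eq_left hgt.le
  have : padicNorm q y < padicNorm q (fc c y) := by
    show padicNorm q y < padicNorm q (y^2 + c)
    rw [hmax, h2]; nlinarith
  exact ⟨by nlinarith [this], this⟩

lemma escape_p {q : ℕ} [Fact q.Prime] {c x : ℚ} (hc : padicNorm q c = (q:ℚ)^2)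
    (hq1 : 1 < (q:ℚ)) (hx : (q:ℚ) < padicNorm q x) : ¬ IsPreper c x := by
  apply not_preper_invariant c x (fun y => (q:ℚ) < padicNorm q y) (padicNorm q) hx
  intro y hy
  have h2 : padicNorm q (y^2) = (padicNorm q y)^2 := norm_sq q y
  have hgt : padicNorm q c < padicNorm q (y^2) := by rw [hc, h2]; nlinarith
  have hmax : padicNorm q (y^2 + c) = padicNorm q (y^2) := by
    rw [padicNorm.add_eq_max_of_ne (ne_of_gt hgt)]
    exact max_eq_left hgt.le
  have hlt : padicNorm q y < padicNorm q (fc c y) := by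
    show padicNorm q y < padicNorm q (y^2 + c)
    rw [hmax, h2]; nlinarith
  exact ⟨by nlinarith [hlt], hlt⟩

lemma preper_norm_p {q : ℕ} [hf : Fact q.Prime] {c x : ℚ} (hc : padicNorm q c = (q:ℚ)^2)
    (hx : IsPreper c x) : padicNorm q x = q := by
  have hq1 : 1 < (q:ℚ) := by exact_mod_cast hf.out.one_lt
  have hnotbig : ¬ ((q:ℚ) < padicNorm q x) := fun h => escape_p hc hq1 h hx
  have hnotsmall : ¬ (padicNorm q x ≤ 1) := by
    intro h
    have h2 : padicNorm q (x^2) = (padicNorm q x)^2 := norm_sq q x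
    have hne : padicNorm q (x^2) ≠ padicNorm q c := by rw [hc, h2]; nlinarith [padicNorm.nonneg (p := q) x]
    have hmax : padicNorm q (x^2 + c) = (q:ℚ)^2 := by
      rw [padicNorm.add_eq_max_of_ne hne, hc]
      exact max_eq_right (by rw [h2]; nlinarith [padicNorm.nonneg (p := q) x])
    have : (q:ℚ) < padicNorm q (fc c x) := by
      show (q:ℚ) < padicNorm q (x^2 + c); rw [hmax]; nlinarith
    exact escape_p hc hq1 this (isPreper_fc hx)
  push_neg at hnotbig hnotsmall
  -- 1 < padicNorm q x ≤ q; discreteness forces = q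
  have hx0 : x ≠ 0 := by
    intro h0; rw [h0, padicNorm.zero] at hnotsmall; linarith
  obtain ⟨z, hz⟩ := padicNorm.values_discrete (p := q) hx0
  rw [hz] at hnotbig hnotsmall ⊢
  have h1 : (0:ℤ) < -z := by
    by_contra h
    push_neg at h
    have : (q:ℚ)^(-z) ≤ (q:ℚ)^(0:ℤ) := zpow_le_zpow_right₀ hq1.le h
    rw [zpow_zero] at this; linarith
  have h2 : -z ≤ 1 := by
    by_contra h
    push_neg at h
    have : (q:ℚ)^(1:ℤ) < (q:ℚ)^(-z) := zpow_lt_zpow_right₀ hq1 h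
    rw [zpow_one] at this; linarith
  have : -z = 1 := le_antisymm h2 h1
  rw [this, zpow_one]

section
variable {p : ℕ} {k : ℤ}

lemma preper_abs (hp : p.Prime) (hP : (p:ℤ) = 2*k+1) (hk : 1 ≤ k) {x : ℚ}
    (hx : IsPreper (cc p k) x) : |x| * p ≤ ((2*(k+1)^2 : ℤ) : ℚ) := by
  by_contra hcon
  push_neg at hcon
  refine not_preper_invariant (cc p k) x
    (fun y => ((2*(k+1)^2 : ℤ) : ℚ) < |y| * p) abs hcon ?_ hx
  intro y hy
  have pq : (p:ℚ) = 2*(k:ℚ)+1 := by exact_mod_cast hP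
  have hk' : (1:ℚ) ≤ (k:ℚ) := by exact_mod_cast hk
  have hp0 : (0:ℚ) < p := by rw [pq]; linarith
  have habs : 0 ≤ |y| := abs_nonneg y
  have hyy : y^2 = |y|^2 := (sq_abs y).symm
  have h1 : 0 < |y| * p - (2*((k:ℚ)+1)^2) := by push_cast at hy; linarith
  have h2 : 0 < |y| * p + (2*((k:ℚ)+1)^2) - p := by rw [pq]; nlinarith
  have expand : (y^2 + cc p k - |y|) * (p:ℚ)^2
      = (|y| * p - 2*((k:ℚ)+1)^2) * (|y| * p + 2*((k:ℚ)+1)^2 - p) := by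
    rw [cc, MM, hyy]
    field_simp
    rw [pq]
    push_cast
    ring
  have hpos : 0 < y^2 + cc p k - |y| := by
    have hprod : 0 < (y^2 + cc p k - |y|) * (p:ℚ)^2 := expand ▸ mul_pos h1 h2
    nlinarith [sq_nonneg (p:ℚ)]
  have hkey : |y| < fc (cc p k) y := by
    show |y| < y^2 + cc p k
    linarith
  have hlt : |y| < |fc (cc p k) y| := lt_of_lt_of_le hkey (le_abs_self _)
  refine ⟨?_, hlt⟩
  have := mul_lt_mul_of_pos_right hlt hp0
  linarith

lemma preper_int (hp : p.Prime) (hP : (p:ℤ) = 2*k+1) (hk : 1 ≤ k) {x : ℚ}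
    (hx : IsPreper (cc p k) x) :
    ∃ a : ℤ, x = (a : ℚ) / p ∧ ¬ ((p:ℤ) ∣ a) ∧ |a| ≤ 2*(k+1)^2 := by
  haveI : Fact p.Prime := ⟨hp⟩
  have hp0 : (0:ℚ) < p := by exact_mod_cast hp.pos
  have hnp : padicNorm p x = p := preper_norm_p (norm_cc_p hp hP) hx
  have hall : ∀ q : ℕ, q.Prime → padicNorm q ((p:ℚ) * x) ≤ 1 := by
    intro q hq
    by_cases hqp : q = p
    · subst hqp
      rw [padicNorm.mul, padicNorm.padicNorm_p hq.one_lt, hnp]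
      rw [inv_mul_cancel₀ (ne_of_gt hp0)]
    · haveI : Fact q.Prime := ⟨hq⟩
      have h1 : padicNorm q x ≤ 1 := by
        by_contra hbig
        push_neg at hbig
        exact escape_q (norm_cc_q hq hqp hp) hbig hx
      have h2 : padicNorm q ((p:ℚ)) ≤ 1 := padicNorm.of_nat p
      rw [padicNorm.mul]
      exact mul_le_one₀ h2 (padicNorm.nonneg _) h1
  obtain ⟨a, ha⟩ := int_of_padicNorm_le_one hall
  refine ⟨a, ?_, ?_, ?_⟩
  · rw [eq_div_iff (ne_of_gt hp0)]
    rw [← ha]; ring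
  · have : padicNorm p ((a:ℚ)) = 1 := by
      rw [← ha, padicNorm.mul, padicNorm.padicNorm_p hp.one_lt, hnp,
        inv_mul_cancel₀ (ne_of_gt hp0)]
    exact (padicNorm.int_eq_one_iff a).mp this
  · have h1 : |x| * p ≤ ((2*(k+1)^2 : ℤ) : ℚ) := preper_abs hp hP hk hx
    have h2 : |(a:ℚ)| = |x| * p := by
      rw [← ha, abs_mul, abs_of_pos hp0, mul_comm]
    have : |(a:ℚ)| ≤ ((2*(k+1)^2 : ℤ) : ℚ) := by rw [h2]; exact h1
    exact_mod_cast this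
end

lemma sq_dvd_helper {P u v : ℤ} (hP : Prime P) (h1 : P ∣ u) (h : P^2 ∣ u*v)
    (hv : ¬ P ∣ v) : P^2 ∣ u := by
  obtain ⟨m, rfl⟩ := h1
  have h2 : P ∣ m * v := by
    have : P*P ∣ P*(m*v) := by
      have e : P*(m*v) = (P*m)*v := by ring
      rw [e, ← sq]; exact h
    exact (mul_dvd_mul_iff_left hP.ne_zero).mp this
  rcases hP.dvd_or_dvd h2 with hm | hv'
  · obtain ⟨n, rfl⟩ := hm
    exact ⟨n, by ring⟩
  · exact absurd hv' hv

lemma cong_classify {Pv k a b b2 : ℤ} (hPp' : Prime Pv) (hP : Pv = 2*k+1) (hk : 1 ≤ k)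
    (hab' : Pv*b = a^2 - MM k) (hbb' : Pv*b2 = b^2 - MM k) :
    Pv^2 ∣ a - 2*(k+1)^2 ∨ Pv^2 ∣ a + 2*(k+1)^2 ∨
    Pv^2 ∣ a - (2*k^2+2*k) ∨ Pv^2 ∣ a + (2*k^2+2*k) := by
  simp only [MM] at hab' hbb'
  subst hP
  have hPp : Prime ((2*k+1) : ℤ) := hPp'
  have hab : ((2*k+1):ℤ)*b = a^2 - (2*(k+1)^2*(2*k^2+2*k+1)) := hab'
  have hbb : ((2*k+1):ℤ)*b2 = b^2 - (2*(k+1)^2*(2*k^2+2*k+1)) := hbb'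
  have hnot2 : ¬ ((2*k+1):ℤ) ∣ 2 := by
    intro h
    have := Int.le_of_dvd (by norm_num) h
    omega
  have dvd_half : ∀ u : ℤ, ((2*k+1):ℤ) ∣ 2*u → ((2*k+1):ℤ) ∣ u := by
    intro u h
    rcases hPp.dvd_or_dvd h with h' | h'
    · exact absurd h' hnot2
    · exact h'
  have hba : ((2*k+1):ℤ) ∣ (2*a-1)*(2*a+1) := by
    refine ⟨4*b + (8*k^3+20*k^2+18*k+7), ?_⟩
    linear_combination -4*hab
  have hbbd : ((2*k+1):ℤ) ∣ (2*b-1)*(2*b+1) := by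
    refine ⟨4*b2 + (8*k^3+20*k^2+18*k+7), ?_⟩
    linear_combination -4*hbb
  rcases hPp.dvd_or_dvd hba with ha1 | ha1 <;> rcases hPp.dvd_or_dvd hbbd with hb1 | hb1
  · left
    obtain ⟨u, hu⟩ := ha1
    obtain ⟨v, hv⟩ := hb1
    have g1 : 2*(b - 2*(k+1)^2) = (2*k+1)*(v - (2*k+3)) := by linear_combination hv
    have hw' : (2*k+1) ∣ (b - 2*(k+1)^2) := dvd_half _ ⟨_, g1⟩
    obtain ⟨w, hw⟩ := hw'
    have hsq : (a - 2*(k+1)^2)*(a + 2*(k+1)^2) = (2*k+1)^2 * w := by linear_combination -hab + (2*k+1)*hw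
    have h1 : 2*(a - 2*(k+1)^2) = (2*k+1)*(u - (2*k+3)) := by linear_combination hu
    have hd1 : (2*k+1) ∣ (a - 2*(k+1)^2) := dvd_half _ ⟨_, h1⟩
    have hnv : ¬ (2*k+1) ∣ (a + 2*(k+1)^2) := by
      intro hdv
      obtain ⟨w2, hw2⟩ := hdv
      have h2 : (2:ℤ) = (2*k+1)*(2*w2 - u - (2*k+3)) := by linear_combination 2*hw2 - hu
      have hle := Int.le_of_dvd (by norm_num) ⟨_, h2⟩
      omega
    exact sq_dvd_helper hPp hd1 (hsq ▸ ⟨w, rfl⟩) hnv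
  · right; right; right
    obtain ⟨u, hu⟩ := ha1
    obtain ⟨v, hv⟩ := hb1
    have g1 : 2*(b + 2*(k+1)^2) = (2*k+1)*(v + (2*k+3)) := by linear_combination hv
    have hw' : (2*k+1) ∣ (b + 2*(k+1)^2) := dvd_half _ ⟨_, g1⟩
    obtain ⟨w, hw⟩ := hw'
    have hsq : (a + (2*k^2+2*k))*(a - (2*k^2+2*k)) = (2*k+1)^2 * w := by linear_combination -hab + (2*k+1)*hw
    have h1 : 2*(a + (2*k^2+2*k)) = (2*k+1)*(u + (2*k+1)) := by linear_combination hu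
    have hd1 : (2*k+1) ∣ (a + (2*k^2+2*k)) := dvd_half _ ⟨_, h1⟩
    have hnv : ¬ (2*k+1) ∣ (a - (2*k^2+2*k)) := by
      intro hdv
      obtain ⟨w2, hw2⟩ := hdv
      have h2 : (2:ℤ) = (2*k+1)*(2*w2 - u + (2*k+1)) := by linear_combination 2*hw2 - hu
      have hle := Int.le_of_dvd (by norm_num) ⟨_, h2⟩
      omega
    exact sq_dvd_helper hPp hd1 (hsq ▸ ⟨w, rfl⟩) hnv
  · right; left
    obtain ⟨u, hu⟩ := ha1
    obtain ⟨v, hv⟩ := hb1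
    have g1 : 2*(b - 2*(k+1)^2) = (2*k+1)*(v - (2*k+3)) := by linear_combination hv
    have hw' : (2*k+1) ∣ (b - 2*(k+1)^2) := dvd_half _ ⟨_, g1⟩
    obtain ⟨w, hw⟩ := hw'
    have hsq : (a + 2*(k+1)^2)*(a - 2*(k+1)^2) = (2*k+1)^2 * w := by linear_combination -hab + (2*k+1)*hw
    have h1 : 2*(a + 2*(k+1)^2) = (2*k+1)*(u + (2*k+3)) := by linear_combination hu
    have hd1 : (2*k+1) ∣ (a + 2*(k+1)^2) := dvd_half _ ⟨_, h1⟩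
    have hnv : ¬ (2*k+1) ∣ (a - 2*(k+1)^2) := by
      intro hdv
      obtain ⟨w2, hw2⟩ := hdv
      have h2 : (2:ℤ) = (2*k+1)*(-2*w2 + u - (2*k+3)) := by linear_combination -2*hw2 + hu
      have hle := Int.le_of_dvd (by norm_num) ⟨_, h2⟩
      omega
    exact sq_dvd_helper hPp hd1 (hsq ▸ ⟨w, rfl⟩) hnv
  · right; right; left
    obtain ⟨u, hu⟩ := ha1
    obtain ⟨v, hv⟩ := hb1
    have g1 : 2*(b + 2*(k+1)^2) = (2*k+1)*(v + (2*k+3)) := by linear_combination hv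
    have hw' : (2*k+1) ∣ (b + 2*(k+1)^2) := dvd_half _ ⟨_, g1⟩
    obtain ⟨w, hw⟩ := hw'
    have hsq : (a - (2*k^2+2*k))*(a + (2*k^2+2*k)) = (2*k+1)^2 * w := by linear_combination -hab + (2*k+1)*hw
    have h1 : 2*(a - (2*k^2+2*k)) = (2*k+1)*(u - (2*k+1)) := by linear_combination hu
    have hd1 : (2*k+1) ∣ (a - (2*k^2+2*k)) := dvd_half _ ⟨_, h1⟩
    have hnv : ¬ (2*k+1) ∣ (a + (2*k^2+2*k)) := by
      intro hdv
      obtain ⟨w2, hw2⟩ := hdv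
      have h2 : (2:ℤ) = (2*k+1)*(-2*w2 + u + (2*k+1)) := by linear_combination -2*hw2 + hu
      have hle := Int.le_of_dvd (by norm_num) ⟨_, h2⟩
      omega
    exact sq_dvd_helper hPp hd1 (hsq ▸ ⟨w, rfl⟩) hnv

section
variable {p : ℕ} {k : ℤ}

lemma orbit_step (hp : p.Prime) (hP : (p:ℤ) = 2*k+1) (hk : 1 ≤ k) {a : ℤ}
    (hx : IsPreper (cc p k) ((a:ℚ)/p)) :
    ∃ b : ℤ, (p:ℤ)*b = a^2 - MM k ∧ IsPreper (cc p k) ((b:ℚ)/p) ∧ ¬((p:ℤ) ∣ b) ∧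
      |b| ≤ 2*(k+1)^2 := by
  have hp0 : (0:ℚ) < p := by exact_mod_cast hp.pos
  have hnext : fc (cc p k) ((a:ℚ)/p) = ((a:ℚ)^2 - (MM k:ℚ)) / (p:ℚ)^2 := by
    show ((a:ℚ)/p)^2 + cc p k = _
    rw [cc]
    field_simp
    ring
  have h2 := isPreper_fc hx
  rw [hnext] at h2
  obtain ⟨b, hbeq, hnd, hle⟩ := preper_int hp hP hk h2
  have key : (p:ℚ) * b = (a:ℚ)^2 - (MM k : ℚ) := by
    have h3 : ((a:ℚ)^2 - (MM k:ℚ)) / (p:ℚ)^2 = (b:ℚ) / p := hbeq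
    field_simp at h3
    have h4 : ((a:ℚ)^2 - (MM k : ℚ))*(p:ℚ) = ((p:ℚ)*b)*(p:ℚ) := by linear_combination (p:ℚ) * h3
    exact (mul_right_cancel₀ (ne_of_gt hp0) h4).symm
  refine ⟨b, by exact_mod_cast key, by rwa [hbeq] at h2, hnd, hle⟩

lemma preper_a (hp : p.Prime) (hP : (p:ℤ) = 2*k+1) (hk : 1 ≤ k) {x : ℚ}
    (hx : IsPreper (cc p k) x) :
    ∃ a : ℤ, x = (a:ℚ)/(p:ℚ) ∧ (a = 2*(k+1)^2 ∨ a = -(2*(k+1)^2) ∨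
      a = 2*k^2+2*k ∨ a = -(2*k^2+2*k) ∨ a = 2*k^2+2*k+1 ∨ a = -(2*k^2+2*k+1)) := by
  obtain ⟨a, hxa, hnda, hlea⟩ := preper_int hp hP hk hx
  rw [hxa] at hx
  obtain ⟨b, hab, hxb, hndb, hleb⟩ := orbit_step hp hP hk hx
  obtain ⟨b2, hbb, -, -, -⟩ := orbit_step hp hP hk hxb
  have hPp : Prime ((p:ℤ)) := Nat.prime_iff_prime_int.mp hp
  have hPk : ((p:ℤ))^2 = 4*k^2+4*k+1 := by rw [hP]; ring
  have hA : |a| ≤ 2*(k+1)^2 := hlea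
  have haL := (abs_le.mp hA).1
  have haR := (abs_le.mp hA).2
  have hbL := (abs_le.mp hleb).1
  have hbR := (abs_le.mp hleb).2
  have hP0 : ((p:ℤ)) ≠ 0 := by rw [hP]; omega
  refine ⟨a, hxa, ?_⟩
  have bound : ∀ m r : ℤ, -(2*(k+1)^2) - 1 ≤ r → r ≤ 2*(k+1)^2 + 1 →
      a - r = ((p:ℤ))^2 * m → m = -1 ∨ m = 0 ∨ m = 1 := by
    intro m r hr1 hr2 hm
    rw [hPk] at hm
    by_contra hno
    have h2 : 2 ≤ m ∨ m ≤ -2 := by omega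
    rcases h2 with h2 | h2
    · nlinarith [mul_le_mul_of_nonneg_left h2 (show (0:ℤ) ≤ 4*k^2+4*k+1 by nlinarith)]
    · nlinarith [mul_le_mul_of_nonneg_left h2 (show (0:ℤ) ≤ 4*k^2+4*k+1 by nlinarith)]
  rcases cong_classify hPp hP hk hab hbb with hc | hc | hc | hc
  · -- P² ∣ a - A
    obtain ⟨m, hm⟩ := hc
    rcases bound m _ (by nlinarith) (by nlinarith) hm with h1 | h1 | h1
    · -- a = A - P² : contradiction via b
      exfalso
      have ha' : a = 2*(k+1)^2 - ((p:ℤ))^2 := by rw [h1] at hm; linarith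
      rw [ha', hP] at hab
      have h3 : ((2*k+1):ℤ)*b = (2*k+1)*(-(6*k^2+6*k+1)) := by
        simp only [MM] at hab
        linear_combination hab
      have hb' : b = -(6*k^2+6*k+1) := mul_left_cancel₀ (by omega) h3
      nlinarith [hbL, hbR]
    · left; rw [h1] at hm; linarith
    · exfalso; rw [h1] at hm; rw [hPk] at hm; nlinarith
  · -- P² ∣ a + A
    obtain ⟨m, hm⟩ := hc
    have hm' : a - (-(2*(k+1)^2)) = ((p:ℤ))^2 * m := by linarith [hm]
    rcases bound m _ (by nlinarith) (by nlinarith) hm' with h1 | h1 | h1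
    · exfalso; rw [h1] at hm'; rw [hPk] at hm'; nlinarith
    · right; left; rw [h1] at hm'; linarith
    · -- a = P² - A : contradiction via b
      exfalso
      have ha' : a = ((p:ℤ))^2 - 2*(k+1)^2 := by rw [h1] at hm'; linarith
      rw [ha', hP] at hab
      have h3 : ((2*k+1):ℤ)*b = (2*k+1)*(-(6*k^2+6*k+1)) := by
        simp only [MM] at hab
        linear_combination hab
      have hb' : b = -(6*k^2+6*k+1) := mul_left_cancel₀ (by omega) h3
      nlinarith [hbL, hbR]
  · -- P² ∣ a - T
    obtain ⟨m, hm⟩ := hc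
    rcases bound m _ (by nlinarith) (by nlinarith) hm with h1 | h1 | h1
    · -- a = T - P² = B
      right; right; right; right; right
      rw [h1] at hm; rw [hPk] at hm; linarith
    · right; right; left; rw [h1] at hm; linarith
    · exfalso; rw [h1] at hm; rw [hPk] at hm; nlinarith
  · -- P² ∣ a + T
    obtain ⟨m, hm⟩ := hc
    have hm' : a - (-(2*k^2+2*k)) = ((p:ℤ))^2 * m := by linarith [hm]
    rcases bound m _ (by nlinarith) (by nlinarith) hm' with h1 | h1 | h1
    · exfalso; rw [h1] at hm'; rw [hPk] at hm'; nlinarith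
    · right; right; right; left; rw [h1] at hm'; linarith
    · -- a = P² - T = -B
      right; right; right; right; left
      rw [h1] at hm'; rw [hPk] at hm'; linarith
  end

section
variable {p : ℕ} {k : ℤ}

lemma fc_step (hp0 : (p:ℚ) ≠ 0) {u v : ℤ} (h : u^2 - MM k = (p:ℤ)*v) :
    fc (cc p k) ((u:ℚ)/p) = (v:ℚ)/p := by
  show ((u:ℚ)/p)^2 + cc p k = (v:ℚ)/p
  rw [cc]
  have hQ : ((u:ℚ))^2 - (MM k:ℚ) = (p:ℚ)*(v:ℚ) := by exact_mod_cast h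
  field_simp
  linear_combination hQ

lemma main_props (hp : p.Prime) (hP : (p:ℤ) = 2*k+1) (hk : 1 ≤ k) :
    {x : ℚ | IsPreper (cc p k) x}.ncard = 6 ∧ {x : ℚ | IsPer (cc p k) x}.ncard = 2 ∧
    ∀ x : ℚ, IsPer (cc p k) x → fc (cc p k) x = x := by
  have hp0 : (p:ℚ) ≠ 0 := by
    have := hp.pos; positivity
  set c := cc p k with hc
  set x1 : ℚ := ((2*(k+1)^2 : ℤ) : ℚ)/p with hx1
  set x2 : ℚ := ((-(2*(k+1)^2) : ℤ) : ℚ)/p with hx2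
  set x3 : ℚ := ((2*k^2+2*k : ℤ) : ℚ)/p with hx3
  set x4 : ℚ := ((-(2*k^2+2*k) : ℤ) : ℚ)/p with hx4
  set x5 : ℚ := ((2*k^2+2*k+1 : ℤ) : ℚ)/p with hx5
  set x6 : ℚ := ((-(2*k^2+2*k+1) : ℤ) : ℚ)/p with hx6
  have s1 : fc c x1 = x1 := fc_step hp0 (by rw [hP, MM]; ring)
  have s6 : fc c x6 = x6 := fc_step hp0 (by rw [hP, MM]; ring)
  have s2 : fc c x2 = x1 := fc_step hp0 (by rw [hP, MM]; ring)
  have s5 : fc c x5 = x6 := fc_step hp0 (by rw [hP, MM]; ring)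
  have s3 : fc c x3 = x2 := fc_step hp0 (by rw [hP, MM]; ring)
  have s4 : fc c x4 = x2 := fc_step hp0 (by rw [hP, MM]; ring)
  -- distinctness of numerators
  have hkk : k ≤ k^2 := by nlinarith
  have neq : ∀ a b : ℤ, a ≠ b → (a:ℚ)/p ≠ (b:ℚ)/p := by
    intro a b hab h
    apply hab
    field_simp at h
    exact_mod_cast h
  -- iterate facts
  have it1 : ∀ n : ℕ, (fc c)^[n] x1 = x1 := by
    intro n; induction n with
    | zero => rfl
    | succ n ih => rw [Function.iterate_succ_apply', ih, s1]
  have it6 : ∀ n : ℕ, (fc c)^[n] x6 = x6 := by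
    intro n; induction n with
    | zero => rfl
    | succ n ih => rw [Function.iterate_succ_apply', ih, s6]
  have it2 : ∀ n : ℕ, (fc c)^[n+1] x2 = x1 := by
    intro n
    rw [Function.iterate_succ_apply, s2, it1]
  have it5 : ∀ n : ℕ, (fc c)^[n+1] x5 = x6 := by
    intro n
    rw [Function.iterate_succ_apply, s5, it6]
  have it3 : ∀ n : ℕ, (fc c)^[n+2] x3 = x1 := by
    intro n
    rw [Function.iterate_succ_apply, s3, it2]
  have it4 : ∀ n : ℕ, (fc c)^[n+2] x4 = x1 := by
    intro n
    rw [Function.iterate_succ_apply, s4, it2]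
  -- the six are preperiodic
  have p1 : IsPreper c x1 := ⟨0, 1, one_pos, by simpa using s1.symm⟩
  have p6 : IsPreper c x6 := ⟨0, 1, one_pos, by simpa using s6.symm⟩
  have p2 : IsPreper c x2 := ⟨1, 2, one_lt_two, by rw [it2 0, it2 1]⟩
  have p5 : IsPreper c x5 := ⟨1, 2, one_lt_two, by rw [it5 0, it5 1]⟩
  have p3 : IsPreper c x3 := ⟨2, 3, by norm_num, by rw [it3 0, it3 1]⟩
  have p4 : IsPreper c x4 := ⟨2, 3, by norm_num, by rw [it4 0, it4 1]⟩
  -- set equality for preperiodic points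
  have hSpre : {x : ℚ | IsPreper c x} = {x1, x2, x3, x4, x5, x6} := by
    ext x
    simp only [Set.mem_setOf_eq, Set.mem_insert_iff, Set.mem_singleton_iff]
    constructor
    · intro hx
      obtain ⟨a, hxa, hcase⟩ := preper_a hp hP hk hx
      rcases hcase with h|h|h|h|h|h
      · exact Or.inl (by rw [hxa, h])
      · exact Or.inr (Or.inl (by rw [hxa, h]))
      · exact Or.inr (Or.inr (Or.inl (by rw [hxa, h])))
      · exact Or.inr (Or.inr (Or.inr (Or.inl (by rw [hxa, h]))))
      · exact Or.inr (Or.inr (Or.inr (Or.inr (Or.inl (by rw [hxa, h])))))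
      · exact Or.inr (Or.inr (Or.inr (Or.inr (Or.inr (by rw [hxa, h])))))
    · rintro (rfl|rfl|rfl|rfl|rfl|rfl)
      exacts [p1, p2, p3, p4, p5, p6]
  -- distinctness
  have d12 : x1 ≠ x2 := neq _ _ (by intro h; nlinarith)
  have d13 : x1 ≠ x3 := neq _ _ (by intro h; nlinarith)
  have d14 : x1 ≠ x4 := neq _ _ (by intro h; nlinarith)
  have d15 : x1 ≠ x5 := neq _ _ (by intro h; nlinarith)
  have d16 : x1 ≠ x6 := neq _ _ (by intro h; nlinarith)
  have d23 : x2 ≠ x3 := neq _ _ (by intro h; nlinarith)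
  have d24 : x2 ≠ x4 := neq _ _ (by intro h; nlinarith)
  have d25 : x2 ≠ x5 := neq _ _ (by intro h; nlinarith)
  have d26 : x2 ≠ x6 := neq _ _ (by intro h; nlinarith)
  have d34 : x3 ≠ x4 := neq _ _ (by intro h; nlinarith)
  have d35 : x3 ≠ x5 := neq _ _ (by intro h; nlinarith)
  have d36 : x3 ≠ x6 := neq _ _ (by intro h; nlinarith)
  have d45 : x4 ≠ x5 := neq _ _ (by intro h; nlinarith)
  have d46 : x4 ≠ x6 := neq _ _ (by intro h; nlinarith)
  have d56 : x5 ≠ x6 := neq _ _ (by intro h; nlinarith)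
  have hfp : ∀ x : ℚ, IsPer c x → (x = x1 ∨ x = x6) := by
      intro x hxper
      have hpre : IsPreper c x := isPer_isPreper hxper
      have hmem : x ∈ ({x1, x2, x3, x4, x5, x6} : Set ℚ) := by rw [← hSpre]; exact hpre
      simp only [Set.mem_insert_iff, Set.mem_singleton_iff] at hmem
      obtain ⟨n, hn1, he⟩ := hxper
      obtain ⟨m, rfl⟩ : ∃ m, n = m + 1 := ⟨n - 1, by omega⟩
      rcases hmem with rfl|rfl|rfl|rfl|rfl|rfl
      · exact Or.inl rfl
      · rw [it2] at he; exact absurd he d12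
      · rcases m with - | m'
        · rw [Function.iterate_one, s3] at he; exact absurd he d23
        · rw [it3] at he; exact absurd he d13
      · rcases m with - | m'
        · rw [Function.iterate_one, s4] at he; exact absurd he d24
        · rw [it4] at he; exact absurd he d14
      · rw [it5] at he; exact absurd he.symm d56
      · exact Or.inr rfl
  have hSper : {x : ℚ | IsPer c x} = {x1, x6} := by
    ext x
    simp only [Set.mem_setOf_eq, Set.mem_insert_iff, Set.mem_singleton_iff]
    constructor
    · exact hfp x
    · rintro (rfl|rfl)
      · exact ⟨1, le_refl 1, by simpa using s1⟩
      · exact ⟨1, le_refl 1, by simpa using s6⟩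
  refine ⟨?_, ?_, ?_⟩
  · rw [hSpre]
    rw [Set.ncard_insert_of_notMem (by simp [d12, d13, d14, d15, d16]),
        Set.ncard_insert_of_notMem (by simp [d23, d24, d25, d26]),
        Set.ncard_insert_of_notMem (by simp [d34, d35, d36]),
        Set.ncard_insert_of_notMem (by simp [d45, d46]),
        Set.ncard_insert_of_notMem (by simp [d56]),
        Set.ncard_singleton]
  · rw [hSper]
    exact Set.ncard_pair d16
  · intro x hxper
    rcases hfp x hxper with rfl | rfl
    exacts [s1, s6]
end

/-- Graph 6(1,1): infinitely many `c ∈ ℚ` with exactly 6 rational preperiodic points,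
exactly 2 of them periodic, and every periodic point fixed. -/
theorem graph_6_1_1 :
    {c : ℚ | {x : ℚ | IsPreper c x}.ncard = 6 ∧ {x : ℚ | IsPer c x}.ncard = 2 ∧
      ∀ x : ℚ, IsPer c x → fc c x = x}.Infinite := by
  have hodd : ∀ p : ℕ, p.Prime → p ≠ 2 → ((p:ℤ) = 2*(((p:ℤ)-1)/2)+1 ∧ 1 ≤ ((p:ℤ)-1)/2) := by
    intro p hp h2
    have h3 : 3 ≤ p := by
      have := hp.two_le
      omega
    have hoddp : p % 2 = 1 := by
      rcases Nat.Prime.eq_two_or_odd hp with h | h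
      · exact absurd h h2
      · exact h
    have h3' : (3:ℤ) ≤ (p:ℤ) := by exact_mod_cast h3
    have : (p:ℤ) % 2 = 1 := by omega
    constructor <;> omega
  have hSinf : {p : ℕ | p.Prime ∧ p ≠ 2}.Infinite := by
    have heq : {p : ℕ | p.Prime ∧ p ≠ 2} = {p | p.Prime} \ {2} := by
      ext q; simp [Set.mem_diff]
    rw [heq]
    exact Nat.infinite_setOf_prime.diff (Set.finite_singleton 2)
  have hinj : Set.InjOn (fun p : ℕ => cc p (((p:ℤ)-1)/2)) {p : ℕ | p.Prime ∧ p ≠ 2} := by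
    intro p1 h1 p2 h2 heq
    by_contra hne
    obtain ⟨hp1, h21⟩ := h1
    obtain ⟨hp2, h22⟩ := h2
    obtain ⟨hP1, hk1⟩ := hodd p1 hp1 h21
    obtain ⟨hP2, hk2⟩ := hodd p2 hp2 h22
    have e1 : padicNorm p1 (cc p1 (((p1:ℤ)-1)/2)) = (p1:ℚ)^2 := norm_cc_p hp1 hP1
    have e2 : padicNorm p1 (cc p2 (((p2:ℤ)-1)/2)) ≤ 1 := norm_cc_q hp1 hne hp2
    have heq' : cc p1 (((p1:ℤ)-1)/2) = cc p2 (((p2:ℤ)-1)/2) := heq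
    rw [heq'] at e1
    have : (2:ℚ) ≤ (p1:ℚ) := by exact_mod_cast hp1.two_le
    nlinarith [e1, e2]
  apply Set.Infinite.mono ?_ (hSinf.image hinj)
  rintro - ⟨q, ⟨hq, hq2⟩, rfl⟩
  obtain ⟨hPq, hkq⟩ := hodd q hq hq2
  exact main_props hq hPq hkq
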